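/- Let (μ, (c_k)) be scalar Gårding–Wightman data on X with associated operators J_k, J'_k on L²(X, μ; ℂ). Assume that μ̃, the pushforward of μ under x ↦ 1−x, is mutually absolutely continuous with μ, and that for every k ≥ 1, conj(c_k(1−x)) = (−1)^k · c_k(x) for μ-a.e. x. Then H^ℝ := {f ∈ L²(X, μ; ℂ) : conj(f(x)) = √((dμ̃/dμ)(x)) · f(1−x) for μ-a.e. x} is a closed real-linear subspace of L²(X, μ; ℂ), invariant under every J_k and every J'_k, satisfying H^ℝ ∩ i·H^ℝ = {0} and L²(X, μ; ℂ) = H^ℝ + i·H^ℝ; i.e. H^ℝ is an invariant real form. -/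

import Mathlib

/-!
Common setup: `GWX` is the compact abelian group `X = ∏_{k ≥ 1} {0,1}` of 0-1 sequences
(with componentwise addition mod 2 and the product σ-algebra, which is generated by the
sets `X_k = {x : x_k = 1}`).  The coordinate `i : ℕ` of `x : GWX` represents the paper's
coordinate `x_{i+1}`, so the Lean index `k : ℕ` corresponds to the paper's index `k + 1`
throughout; in particular the paper's sign `(-1)^k` becomes `(-1)^(k+1)` here.
-/

open MeasureTheory Complex Filter
open scoped ENNReal

noncomputable section

abbrev GWX : Type := ℕ → ZMod 2

/-- `δ_k`: the sequence with `1` in the `k`-th place (the paper's `(k+1)`-th place)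
and `0` elsewhere. -/
def gwDelta (k : ℕ) : GWX := fun i => if i = k then 1 else 0

/-- The componentwise complement `x ↦ 1 - x`. -/
def gwFlip (x : GWX) : GWX := fun i => 1 - x i

/-- The sign `(-1)^{x_1 + ⋯ + x_{k-1} + 1}` of the paper, for the paper's index `k + 1`. -/
def gwSign (k : ℕ) (x : GWX) : ℂ := (-1 : ℂ) ^ ((∑ i ∈ Finset.range k, (x i).val) + 1)

open Topology

lemma gwFlip_invol : Function.Involutive gwFlip := by
  intro x; funext i; show 1 - (1 - x i) = x i; ring

lemma gwT_invol (k : ℕ) : Function.Involutive (· + gwDelta k) := by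
  intro x; funext i
  show x i + gwDelta k i + gwDelta k i = x i
  have : ∀ a b : ZMod 2, a + b + b = a := by decide
  exact this _ _

lemma gwFlip_measurable : Measurable gwFlip :=
  measurable_pi_lambda _ fun i => (measurable_of_countable _).comp (measurable_pi_apply i)

lemma gwT_measurable (k : ℕ) : Measurable (· + gwDelta k) := by
  apply measurable_pi_lambda
  intro i
  exact (measurable_of_countable (fun a : ZMod 2 => a + gwDelta k i)).comp (measurable_pi_apply i)

def gwFlipE : GWX ≃ᵐ GWX :=
  ⟨gwFlip_invol.toPerm, gwFlip_measurable, gwFlip_measurable⟩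

def gwTE (k : ℕ) : GWX ≃ᵐ GWX :=
  ⟨(gwT_invol k).toPerm, gwT_measurable k, gwT_measurable k⟩

lemma gwFlip_add (x : GWX) (k : ℕ) : gwFlip (x + gwDelta k) = gwFlip x + gwDelta k := by
  funext i
  show 1 - (x i + gwDelta k i) = (1 - x i) + gwDelta k i
  have : ∀ a b : ZMod 2, 1 - (a + b) = 1 - a + b := by decide
  exact this _ _

lemma gwFlipE_coe : ⇑gwFlipE = gwFlip := rfl
lemma gwT_invol' (k : ℕ) (x : GWX) : x + gwDelta k + gwDelta k = x := gwT_invol k x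
lemma gwFlip_invol' (x : GWX) : gwFlip (gwFlip x) = x := gwFlip_invol x
lemma gwTE_coe (k : ℕ) : ⇑(gwTE k) = (· + gwDelta k) := rfl

section Meas
variable {μ : Measure GWX} [SigmaFinite μ]

lemma gw_ae_comp {e : GWX → GWX} (he : Measurable e) (habs : μ.map e ≪ μ)
    {P : GWX → Prop} (h : ∀ᵐ x ∂μ, P x) : ∀ᵐ x ∂μ, P (e x) :=
  ae_of_ae_map he.aemeasurable (h.filter_mono habs.ae_le)

instance gw_sf_flip : SigmaFinite (μ.map gwFlip) := by
  rw [← gwFlipE_coe]; exact gwFlipE.sigmaFinite_map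

instance gw_sf_T (k : ℕ) : SigmaFinite (μ.map (· + gwDelta k)) := by
  rw [← gwTE_coe]; exact (gwTE k).sigmaFinite_map

-- σ-finiteness of double maps
lemma gw_sf_map (e : GWX ≃ᵐ GWX) (ν : Measure GWX) [SigmaFinite ν] :
    SigmaFinite (ν.map e) := e.sigmaFinite_map

lemma gw_flipT_comm (k : ℕ) : gwFlip ∘ (· + gwDelta k) = (· + gwDelta k) ∘ gwFlip := by
  funext x; exact (gwFlip_add x k)

-- d((T∘F)_*μ)/dμ computed two ways
lemma gw_rnDeriv_key (k : ℕ)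
    (hq : μ.map (· + gwDelta k) ≪ μ ∧ μ ≪ μ.map (· + gwDelta k))
    (hflip : μ.map gwFlip ≪ μ ∧ μ ≪ μ.map gwFlip) :
    ∀ᵐ x ∂μ,
      (μ.map (· + gwDelta k)).rnDeriv μ x * (μ.map gwFlip).rnDeriv μ (x + gwDelta k)
      = (μ.map gwFlip).rnDeriv μ x * (μ.map (· + gwDelta k)).rnDeriv μ (gwFlip x) := by
  have hTm : Measurable (· + gwDelta k) := gwT_measurable k
  have hFm : Measurable gwFlip := gwFlip_measurable
  have hsfFT : SigmaFinite ((μ.map gwFlip).map (· + gwDelta k)) := by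
    have := (gwTE k).sigmaFinite_map (μ := μ.map gwFlip); rwa [gwTE_coe] at this
  have hsfTF : SigmaFinite ((μ.map (· + gwDelta k)).map gwFlip) := by
    have := gwFlipE.sigmaFinite_map (μ := μ.map (· + gwDelta k)); rwa [gwFlipE_coe] at this
  have hTe : MeasurableEmbedding (· + gwDelta k) := by
    have := (gwTE k).measurableEmbedding; rwa [gwTE_coe] at this
  have hFe : MeasurableEmbedding gwFlip := by
    have := gwFlipE.measurableEmbedding; rwa [gwFlipE_coe] at this
  have h1 : (fun x => ((μ.map gwFlip).map (· + gwDelta k)).rnDeriv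
        (μ.map (· + gwDelta k)) (x + gwDelta k)) =ᵐ[μ] (μ.map gwFlip).rnDeriv μ :=
    hTe.rnDeriv_map (μ.map gwFlip) μ
  have h1' : ∀ᵐ x ∂μ, ((μ.map gwFlip).map (· + gwDelta k)).rnDeriv
        (μ.map (· + gwDelta k)) x = (μ.map gwFlip).rnDeriv μ (x + gwDelta k) := by
    have h := gw_ae_comp hTm hq.1 h1
    filter_upwards [h] with x hx
    calc ((μ.map gwFlip).map (· + gwDelta k)).rnDeriv (μ.map (· + gwDelta k)) x
        = ((μ.map gwFlip).map (· + gwDelta k)).rnDeriv (μ.map (· + gwDelta k))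
            (x + gwDelta k + gwDelta k) := by rw [gwT_invol' k x]
      _ = (μ.map gwFlip).rnDeriv μ (x + gwDelta k) := hx
  have h3 : ((μ.map gwFlip).map (· + gwDelta k)).rnDeriv (μ.map (· + gwDelta k))
        * (μ.map (· + gwDelta k)).rnDeriv μ
      =ᵐ[μ] ((μ.map gwFlip).map (· + gwDelta k)).rnDeriv μ :=
    Measure.rnDeriv_mul_rnDeriv (hflip.1.map hTm)
  have h2 : (fun x => ((μ.map (· + gwDelta k)).map gwFlip).rnDeriv
        (μ.map gwFlip) (gwFlip x)) =ᵐ[μ] (μ.map (· + gwDelta k)).rnDeriv μ :=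
    hFe.rnDeriv_map (μ.map (· + gwDelta k)) μ
  have h2' : ∀ᵐ x ∂μ, ((μ.map (· + gwDelta k)).map gwFlip).rnDeriv
        (μ.map gwFlip) x = (μ.map (· + gwDelta k)).rnDeriv μ (gwFlip x) := by
    have h := gw_ae_comp hFm hflip.1 h2
    filter_upwards [h] with x hx
    calc ((μ.map (· + gwDelta k)).map gwFlip).rnDeriv (μ.map gwFlip) x
        = ((μ.map (· + gwDelta k)).map gwFlip).rnDeriv (μ.map gwFlip)
            (gwFlip (gwFlip x)) := by rw [gwFlip_invol' x]
      _ = (μ.map (· + gwDelta k)).rnDeriv μ (gwFlip x) := hx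
  have h4 : ((μ.map (· + gwDelta k)).map gwFlip).rnDeriv (μ.map gwFlip)
        * (μ.map gwFlip).rnDeriv μ
      =ᵐ[μ] ((μ.map (· + gwDelta k)).map gwFlip).rnDeriv μ :=
    Measure.rnDeriv_mul_rnDeriv (hq.1.map hFm)
  have hmapeq : (μ.map gwFlip).map (· + gwDelta k) = (μ.map (· + gwDelta k)).map gwFlip := by
    rw [Measure.map_map hTm hFm, Measure.map_map hFm hTm, ← gw_flipT_comm k]
  rw [hmapeq] at h1' h3
  filter_upwards [h1', h2', h3, h4] with x e1 e2 e3 e4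
  simp only [Pi.mul_apply] at e3 e4
  rw [← e1, ← e2]
  have h5 := e3.trans e4.symm
  rw [mul_comm, h5]
  exact mul_comm _ _

lemma gw_rnDeriv_flip_mul (hflip : μ.map gwFlip ≪ μ ∧ μ ≪ μ.map gwFlip) :
    ∀ᵐ x ∂μ, (μ.map gwFlip).rnDeriv μ x * (μ.map gwFlip).rnDeriv μ (gwFlip x) = 1 := by
  have hFm : Measurable gwFlip := gwFlip_measurable
  have hFe : MeasurableEmbedding gwFlip := by
    rw [← gwFlipE_coe]; exact gwFlipE.measurableEmbedding
  have hFF : (μ.map gwFlip).map gwFlip = μ := by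
    rw [Measure.map_map hFm hFm]
    have : gwFlip ∘ gwFlip = id := funext gwFlip_invol
    rw [this, Measure.map_id]
  have h1 : (fun x => ((μ.map gwFlip).map gwFlip).rnDeriv (μ.map gwFlip) (gwFlip x)) =ᵐ[μ]
      (μ.map gwFlip).rnDeriv μ := hFe.rnDeriv_map (μ.map gwFlip) μ
  rw [hFF] at h1
  have h1' : ∀ᵐ x ∂μ, μ.rnDeriv (μ.map gwFlip) x
      = (μ.map gwFlip).rnDeriv μ (gwFlip x) := by
    have h := gw_ae_comp hFm hflip.1 h1
    filter_upwards [h] with x hx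
    calc μ.rnDeriv (μ.map gwFlip) x
        = μ.rnDeriv (μ.map gwFlip) (gwFlip (gwFlip x)) := by rw [gwFlip_invol' x]
      _ = (μ.map gwFlip).rnDeriv μ (gwFlip x) := hx
  have h3 : μ.rnDeriv (μ.map gwFlip) * (μ.map gwFlip).rnDeriv μ =ᵐ[μ] μ.rnDeriv μ :=
    Measure.rnDeriv_mul_rnDeriv hflip.2
  filter_upwards [h1', h3, μ.rnDeriv_self] with x e1 e3 es
  simp only [Pi.mul_apply] at e3
  rw [e1] at e3
  rw [mul_comm, e3, es]

end Meas

section Meas2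
variable {μ : Measure GWX} [SigmaFinite μ]

/-- abbreviation for w -/
def gwW (μ : Measure GWX) (x : GWX) : ℝ :=
  Real.sqrt (((μ.map gwFlip).rnDeriv μ x).toReal)

def gwR (μ : Measure GWX) (k : ℕ) (x : GWX) : ℝ :=
  Real.sqrt (((μ.map (· + gwDelta k)).rnDeriv μ x).toReal)

lemma gwW_nonneg (x : GWX) : 0 ≤ gwW μ x := Real.sqrt_nonneg _

lemma gwW_measurable : Measurable (gwW μ) :=
  (Measure.measurable_rnDeriv _ _).ennreal_toReal.sqrt

lemma gw_w_flip_mul (hflip : μ.map gwFlip ≪ μ ∧ μ ≪ μ.map gwFlip) :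
    ∀ᵐ x ∂μ, gwW μ x * gwW μ (gwFlip x) = 1 := by
  have hlt : ∀ᵐ x ∂μ, (μ.map gwFlip).rnDeriv μ x < ∞ := Measure.rnDeriv_lt_top _ _
  have hltF : ∀ᵐ x ∂μ, (μ.map gwFlip).rnDeriv μ (gwFlip x) < ∞ :=
    gw_ae_comp gwFlip_measurable hflip.1 hlt
  filter_upwards [gw_rnDeriv_flip_mul hflip, hlt, hltF] with x h h1 h2
  have : ((μ.map gwFlip).rnDeriv μ x).toReal * ((μ.map gwFlip).rnDeriv μ (gwFlip x)).toReal
      = 1 := by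
    rw [← ENNReal.toReal_mul, h, ENNReal.toReal_one]
  unfold gwW
  rw [← Real.sqrt_mul ENNReal.toReal_nonneg, this, Real.sqrt_one]

lemma gw_w_key (k : ℕ)
    (hq : μ.map (· + gwDelta k) ≪ μ ∧ μ ≪ μ.map (· + gwDelta k))
    (hflip : μ.map gwFlip ≪ μ ∧ μ ≪ μ.map gwFlip) :
    ∀ᵐ x ∂μ, gwR μ k x * gwW μ (x + gwDelta k) = gwW μ x * gwR μ k (gwFlip x) := by
  have hlt1 : ∀ᵐ x ∂μ, (μ.map (· + gwDelta k)).rnDeriv μ x < ∞ := Measure.rnDeriv_lt_top _ _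
  have hlt2 : ∀ᵐ x ∂μ, (μ.map gwFlip).rnDeriv μ (x + gwDelta k) < ∞ :=
    gw_ae_comp (gwT_measurable k) hq.1 (Measure.rnDeriv_lt_top _ _)
  have hlt3 : ∀ᵐ x ∂μ, (μ.map gwFlip).rnDeriv μ x < ∞ := Measure.rnDeriv_lt_top _ _
  have hlt4 : ∀ᵐ x ∂μ, (μ.map (· + gwDelta k)).rnDeriv μ (gwFlip x) < ∞ :=
    gw_ae_comp gwFlip_measurable hflip.1 (Measure.rnDeriv_lt_top _ _)
  filter_upwards [gw_rnDeriv_key k hq hflip, hlt1, hlt2, hlt3, hlt4] with x h h1 h2 h3 h4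
  have ht : (((μ.map (· + gwDelta k)).rnDeriv μ x).toReal)
        * (((μ.map gwFlip).rnDeriv μ (x + gwDelta k)).toReal)
      = (((μ.map gwFlip).rnDeriv μ x).toReal)
        * (((μ.map (· + gwDelta k)).rnDeriv μ (gwFlip x)).toReal) := by
    rw [← ENNReal.toReal_mul, ← ENNReal.toReal_mul, h]
  unfold gwR gwW
  rw [← Real.sqrt_mul ENNReal.toReal_nonneg, ← Real.sqrt_mul ENNReal.toReal_nonneg, ht]

end Meas2

-- sign lemmas
lemma gwSign_conj (k : ℕ) (x : GWX) : (starRingEnd ℂ) (gwSign k x) = gwSign k x := by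
  unfold gwSign; rw [map_pow, map_neg, map_one]

lemma gwSign_mul_self (k : ℕ) (x : GWX) : gwSign k x * gwSign k x = 1 := by
  unfold gwSign; rw [← mul_pow]; norm_num

lemma gwSign_flip (k : ℕ) (x : GWX) : gwSign k (gwFlip x) = (-1 : ℂ) ^ k * gwSign k x := by
  have hval : ∀ a : ZMod 2, (1 - a).val + a.val = 1 := by decide
  have hsum : (∑ i ∈ Finset.range k, ((gwFlip x) i).val)
      + (∑ i ∈ Finset.range k, (x i).val) = k := by
    rw [← Finset.sum_add_distrib]
    have : ∀ i, ((gwFlip x) i).val + (x i).val = 1 := fun i => hval (x i)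
    simp [this]
  have h1 : gwSign k (gwFlip x) * gwSign k x = (-1 : ℂ) ^ k := by
    unfold gwSign
    rw [← pow_add]
    have he : (∑ i ∈ Finset.range k, ((gwFlip x) i).val) + 1
        + ((∑ i ∈ Finset.range k, (x i).val) + 1) = k + 2 := by omega
    rw [he, pow_add]; norm_num
  calc gwSign k (gwFlip x) = gwSign k (gwFlip x) * (gwSign k x * gwSign k x) := by
        rw [gwSign_mul_self, mul_one]
    _ = (gwSign k (gwFlip x) * gwSign k x) * gwSign k x := by ring
    _ = (-1 : ℂ) ^ k * gwSign k x := by rw [h1]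

lemma gw_neg_one_pow_flip (a : ZMod 2) :
    ((-1 : ℂ)) ^ ((1 - a).val) = -((-1 : ℂ)) ^ a.val := by
  have hval : ∀ b : ZMod 2, (1 - b).val + b.val = 1 := by decide
  have h2 : ((-1 : ℂ)) ^ a.val * ((-1 : ℂ)) ^ a.val = 1 := by
    rw [← mul_pow]; norm_num
  calc ((-1 : ℂ)) ^ ((1 - a).val)
      = ((-1 : ℂ)) ^ ((1 - a).val) * (((-1 : ℂ)) ^ a.val * ((-1 : ℂ)) ^ a.val) := by
        rw [h2, mul_one]
    _ = ((-1 : ℂ)) ^ ((1 - a).val + a.val) * ((-1 : ℂ)) ^ a.val := by rw [pow_add]; ring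
    _ = -((-1 : ℂ)) ^ a.val := by rw [hval a]; ring

lemma gw_neg_one_pow_conj (v : ℕ) : (starRingEnd ℂ) ((-1 : ℂ) ^ v) = (-1 : ℂ) ^ v := by
  rw [map_pow, map_neg, map_one]

section Theta
variable {μ : Measure GWX} [SigmaFinite μ]

lemma gw_theta_memLp (hflip : μ.map gwFlip ≪ μ ∧ μ ≪ μ.map gwFlip) (f : Lp ℂ 2 μ) :
    MemLp (fun x => ((gwW μ x : ℝ) : ℂ)
      * (starRingEnd ℂ) ((↑f : GWX → ℂ) (gwFlip x))) 2 μ := by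
  have sm : StronglyMeasurable (↑f : GWX → ℂ) := Lp.stronglyMeasurable f
  have smg : StronglyMeasurable (fun x => ((gwW μ x : ℝ) : ℂ)
      * (starRingEnd ℂ) ((↑f : GWX → ℂ) (gwFlip x))) := by
    apply StronglyMeasurable.mul
    · exact (Complex.continuous_ofReal.comp_stronglyMeasurable
        gwW_measurable.stronglyMeasurable)
    · exact Complex.continuous_conj.comp_stronglyMeasurable
        (sm.comp_measurable gwFlip_measurable)
  refine ⟨smg.aestronglyMeasurable, ?_⟩
  have hne : eLpNorm (fun x => ((gwW μ x : ℝ) : ℂ)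
      * (starRingEnd ℂ) ((↑f : GWX → ℂ) (gwFlip x))) 2 μ = eLpNorm (↑f) 2 μ := by
    rw [eLpNorm_eq_lintegral_rpow_enorm_toReal (by norm_num) (by norm_num),
      eLpNorm_eq_lintegral_rpow_enorm_toReal (by norm_num) (by norm_num)]
    simp only [enorm_eq_nnnorm]
    congr 1
    have hlt : ∀ᵐ x ∂μ, (μ.map gwFlip).rnDeriv μ x < ∞ := Measure.rnDeriv_lt_top _ _
    have step1 : ∀ᵐ x ∂μ, (‖((gwW μ x : ℝ) : ℂ)
        * (starRingEnd ℂ) ((↑f : GWX → ℂ) (gwFlip x))‖₊ : ℝ≥0∞) ^ ((2:ℝ≥0∞).toReal)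
        = (μ.map gwFlip).rnDeriv μ x
          * (‖(↑f : GWX → ℂ) (gwFlip x)‖₊ : ℝ≥0∞) ^ ((2:ℝ≥0∞).toReal) := by
      filter_upwards [hlt] with x hx
      have h2 : ((2:ℝ≥0∞).toReal) = (2:ℝ) := by norm_num
      rw [h2]
      simp only [← enorm_eq_nnnorm]
      have hnorm : ‖((gwW μ x : ℝ) : ℂ) * (starRingEnd ℂ) ((↑f : GWX → ℂ) (gwFlip x))‖
          = gwW μ x * ‖(↑f : GWX → ℂ) (gwFlip x)‖ := by
        rw [norm_mul, Complex.norm_real, RingHomIsometric.norm_map,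
          Real.norm_of_nonneg (gwW_nonneg x)]
      rw [← ofReal_norm, hnorm,
        ENNReal.ofReal_mul (gwW_nonneg x),
        ENNReal.mul_rpow_of_nonneg _ _ (by norm_num : (0:ℝ) ≤ 2),
        ofReal_norm]
      congr 1
      rw [ENNReal.ofReal_rpow_of_nonneg (gwW_nonneg x) (by norm_num : (0:ℝ) ≤ 2)]
      have : (gwW μ x) ^ (2:ℝ) = ((μ.map gwFlip).rnDeriv μ x).toReal := by
        rw [show (2:ℝ) = ((2:ℕ):ℝ) by norm_num, Real.rpow_natCast]
        exact Real.sq_sqrt ENNReal.toReal_nonneg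
      rw [this, ENNReal.ofReal_toReal hx.ne]
    rw [lintegral_congr_ae step1]
    have hmeas : Measurable (fun y => (‖(↑f : GWX → ℂ) y‖₊ : ℝ≥0∞) ^ ((2:ℝ≥0∞).toReal)) := by
      exact (sm.measurable.nnnorm.coe_nnreal_ennreal).pow_const _
    have hae : Measurable fun a : GWX =>
        (‖(↑f : GWX → ℂ) (gwFlip a)‖₊ : ℝ≥0∞) ^ ((2:ℝ≥0∞).toReal) :=
      hmeas.comp gwFlip_measurable
    rw [lintegral_rnDeriv_mul hflip.1 hae.aemeasurable,
      lintegral_map hae gwFlip_measurable]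
    exact lintegral_congr fun x => by rw [gwFlip_invol' x]
  rw [hne]
  exact (Lp.memLp f).2

end Theta

/-- for scalar Gårding–Wightman data `(μ, (c_k))` with `μ̃ = (x ↦ 1-x)_* μ`
mutually absolutely continuous with `μ` and `conj(c_k(1-x)) = (-1)^k c_k(x)` a.e. (here
`(-1)^(k+1)`, for the paper's index `k+1`), the set
`H^ℝ = {f : conj(f(x)) = √((dμ̃/dμ)(x)) f(1-x) a.e.}` is a closed real subspace of
`L²(X, μ; ℂ)`, invariant under every `J_k` and `J'_k`, with `H^ℝ ∩ i H^ℝ = {0}` and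
`L² = H^ℝ + i H^ℝ`: an invariant real form. -/
theorem gw_real_form
    (μ : Measure GWX) [SigmaFinite μ]
    (hq : ∀ k : ℕ, μ.map (· + gwDelta k) ≪ μ ∧ μ ≪ μ.map (· + gwDelta k))
    (c : ℕ → GWX → ℂ)
    (hcm : ∀ k, Measurable (c k))
    (hc1 : ∀ k, ∀ᵐ x ∂μ, ‖c k x‖ = 1)
    (hc2 : ∀ k, ∀ᵐ x ∂μ, (starRingEnd ℂ) (c k x) = c k (x + gwDelta k))
    (hc3 : ∀ k l, ∀ᵐ x ∂μ, c k x * c l (x + gwDelta k) = c l x * c k (x + gwDelta l))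
    (J J' : ℕ → Lp ℂ 2 μ → Lp ℂ 2 μ)
    (hJ : ∀ k f, (↑(J k f) : GWX → ℂ) =ᵐ[μ] fun x =>
      gwSign k x * Complex.I * c k x *
        (Real.sqrt (((μ.map (· + gwDelta k)).rnDeriv μ x).toReal) : ℂ) *
        (↑f : GWX → ℂ) (x + gwDelta k))
    (hJ' : ∀ k f, (↑(J' k f) : GWX → ℂ) =ᵐ[μ] fun x =>
      (-1 : ℂ) ^ (x k).val * Complex.I * (↑(J k f) : GWX → ℂ) x)
    (hflip : μ.map gwFlip ≪ μ ∧ μ ≪ μ.map gwFlip)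
    (hc4 : ∀ k : ℕ, ∀ᵐ x ∂μ,
      (starRingEnd ℂ) (c k (gwFlip x)) = (-1 : ℂ) ^ (k + 1) * c k x)
    (HR : Set (Lp ℂ 2 μ))
    (hHR : HR = {f : Lp ℂ 2 μ | ∀ᵐ x ∂μ,
      (starRingEnd ℂ) ((↑f : GWX → ℂ) x) =
        (Real.sqrt (((μ.map gwFlip).rnDeriv μ x).toReal) : ℂ) *
          (↑f : GWX → ℂ) (gwFlip x)}) :
    IsClosed HR ∧
    (0 : Lp ℂ 2 μ) ∈ HR ∧
    (∀ f ∈ HR, ∀ g ∈ HR, f + g ∈ HR) ∧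
    (∀ (r : ℝ), ∀ f ∈ HR, r • f ∈ HR) ∧
    (∀ k : ℕ, ∀ f ∈ HR, J k f ∈ HR ∧ J' k f ∈ HR) ∧
    (∀ f ∈ HR, (∃ g ∈ HR, f = Complex.I • g) → f = 0) ∧
    (∀ f : Lp ℂ 2 μ, ∃ g ∈ HR, ∃ h ∈ HR, f = g + Complex.I • h) := by
  subst hHR
  have pullF : ∀ {P : GWX → Prop}, (∀ᵐ x ∂μ, P x) → ∀ᵐ x ∂μ, P (gwFlip x) :=
    fun h => gw_ae_comp gwFlip_measurable hflip.1 h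
  have pullT : ∀ (k : ℕ) {P : GWX → Prop}, (∀ᵐ x ∂μ, P x) →
      ∀ᵐ x ∂μ, P (x + gwDelta k) :=
    fun k {P} h => gw_ae_comp (gwT_measurable k) (hq k).1 h
  have hmem : ∀ f : Lp ℂ 2 μ,
      f ∈ {f : Lp ℂ 2 μ | ∀ᵐ x ∂μ, (starRingEnd ℂ) ((↑f : GWX → ℂ) x) =
        (Real.sqrt (((μ.map gwFlip).rnDeriv μ x).toReal) : ℂ) *
          (↑f : GWX → ℂ) (gwFlip x)}
      ↔ ∀ᵐ x ∂μ, (starRingEnd ℂ) ((↑f : GWX → ℂ) x) =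
          ((gwW μ x : ℝ) : ℂ) * (↑f : GWX → ℂ) (gwFlip x) := fun f => Iff.rfl
  refine ⟨?_, ?_, ?_, ?_, ?_, ?_, ?_⟩
  -- closedness
  · refine IsSeqClosed.isClosed ?_
    intro fs f hfs hlim
    haveI : Fact ((1:ℝ≥0∞) ≤ 2) := ⟨one_le_two⟩
    have htm : TendstoInMeasure μ (fun n => ↑(fs n)) atTop ↑f :=
      tendstoInMeasure_of_tendsto_Lp hlim
    obtain ⟨ns, -, hae⟩ := htm.exists_seq_tendsto_ae
    have haeF : ∀ᵐ x ∂μ, Tendsto (fun i => (↑(fs (ns i)) : GWX → ℂ) (gwFlip x)) atTop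
        (𝓝 ((↑f : GWX → ℂ) (gwFlip x))) := pullF hae
    have hall : ∀ᵐ x ∂μ, ∀ i, (starRingEnd ℂ) ((↑(fs (ns i)) : GWX → ℂ) x) =
        ((gwW μ x : ℝ) : ℂ) * (↑(fs (ns i)) : GWX → ℂ) (gwFlip x) :=
      ae_all_iff.mpr fun i => (hmem _).1 (hfs (ns i))
    rw [hmem f]
    filter_upwards [hae, haeF, hall] with x h1 h2 h3
    have hL : Tendsto (fun i => (starRingEnd ℂ) ((↑(fs (ns i)) : GWX → ℂ) x)) atTop
        (𝓝 ((starRingEnd ℂ) ((↑f : GWX → ℂ) x))) :=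
      (Complex.continuous_conj.tendsto _).comp h1
    have hR : Tendsto (fun i => ((gwW μ x : ℝ) : ℂ) * (↑(fs (ns i)) : GWX → ℂ) (gwFlip x))
        atTop (𝓝 (((gwW μ x : ℝ) : ℂ) * (↑f : GWX → ℂ) (gwFlip x))) :=
      tendsto_const_nhds.mul h2
    exact tendsto_nhds_unique (hL.congr h3) hR
  -- zero
  · rw [hmem]
    filter_upwards [Lp.coeFn_zero ℂ 2 μ, pullF (Lp.coeFn_zero ℂ 2 μ)] with x h1 h2
    rw [h1, h2]
    simp
  -- add
  · intro f hf g hg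
    rw [hmem] at hf hg ⊢
    filter_upwards [hf, hg, Lp.coeFn_add f g, pullF (Lp.coeFn_add f g)] with x e1 e2 e3 e4
    rw [e3, e4]
    simp only [Pi.add_apply, map_add]
    rw [e1, e2]; ring
  -- real smul
  · intro r f hf
    rw [hmem] at hf ⊢
    filter_upwards [hf, Lp.coeFn_smul r f, pullF (Lp.coeFn_smul r f)] with x e1 e2 e3
    rw [e2, e3]
    simp only [Pi.smul_apply, Complex.real_smul, map_mul, Complex.conj_ofReal]
    rw [e1]; ring
  -- J and J'
  · intro k f hf
    rw [hmem] at hf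
    have hJmem : ∀ᵐ x ∂μ, (starRingEnd ℂ) ((↑(J k f) : GWX → ℂ) x) =
        ((gwW μ x : ℝ) : ℂ) * (↑(J k f) : GWX → ℂ) (gwFlip x) := by
      have hc4' : ∀ᵐ x ∂μ, c k (gwFlip x) = (-1 : ℂ) ^ (k + 1) * (starRingEnd ℂ) (c k x) := by
        filter_upwards [hc4 k] with x h
        have := congrArg (starRingEnd ℂ) h
        simpa [map_mul] using this
      filter_upwards [hJ k f, pullF (hJ k f), pullT k hf, hc4',
        gw_w_key k (hq k) hflip] with x ha hb hmem' hcf hwkey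
      have hRdef : ∀ y : GWX,
          (Real.sqrt (((μ.map (· + gwDelta k)).rnDeriv μ y).toReal)) = gwR μ k y :=
        fun _ => rfl
      simp only [hRdef] at ha hb
      have hcast : ((gwR μ k x : ℝ) : ℂ) * ((gwW μ (x + gwDelta k) : ℝ) : ℂ)
          = ((gwW μ x : ℝ) : ℂ) * ((gwR μ k (gwFlip x) : ℝ) : ℂ) := by
        exact_mod_cast congrArg Complex.ofReal hwkey
      have hsgn : ((-1 : ℂ)) ^ k * ((-1 : ℂ)) ^ (k + 1) = -1 := by
        rw [← pow_add]
        exact Odd.neg_one_pow ⟨k, by ring⟩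
      have hA : (starRingEnd ℂ) ((↑(J k f) : GWX → ℂ) x)
          = gwSign k x * (-Complex.I) * (starRingEnd ℂ) (c k x) * ((gwR μ k x : ℝ) : ℂ)
            * (((gwW μ (x + gwDelta k) : ℝ) : ℂ)
              * (↑f : GWX → ℂ) (gwFlip (x + gwDelta k))) := by
        rw [ha]
        simp only [map_mul, gwSign_conj, Complex.conj_I, Complex.conj_ofReal]
        rw [hmem']
        try ring
      have hB : ((gwW μ x : ℝ) : ℂ) * (↑(J k f) : GWX → ℂ) (gwFlip x)
          = ((gwW μ x : ℝ) : ℂ) * (((-1 : ℂ)) ^ k * gwSign k x * Complex.I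
            * (((-1 : ℂ)) ^ (k + 1) * (starRingEnd ℂ) (c k x))
            * ((gwR μ k (gwFlip x) : ℝ) : ℂ)
            * (↑f : GWX → ℂ) (gwFlip (x + gwDelta k))) := by
        rw [hb, gwSign_flip, hcf, ← gwFlip_add]
        try ring
      rw [hA, hB]
      linear_combination
        (-(gwSign k x * Complex.I * (starRingEnd ℂ) (c k x)
            * (↑f : GWX → ℂ) (gwFlip (x + gwDelta k)))) * hcast
        + (-(gwSign k x * Complex.I * (starRingEnd ℂ) (c k x)
            * (↑f : GWX → ℂ) (gwFlip (x + gwDelta k)) * ((gwW μ x : ℝ) : ℂ)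
            * ((gwR μ k (gwFlip x) : ℝ) : ℂ))) * hsgn
    constructor
    · rw [hmem]; exact hJmem
    · rw [hmem]
      filter_upwards [hJ' k f, pullF (hJ' k f), hJmem] with x ha hb hm
      rw [ha, hb]
      have hflipk : (gwFlip x) k = 1 - x k := rfl
      simp only [map_mul, gw_neg_one_pow_conj, Complex.conj_I, hflipk,
        gw_neg_one_pow_flip (x k)]
      rw [hm]
      ring
  -- trivial intersection
  · rintro f hf ⟨g, hg, rfl⟩
    rw [hmem] at hf hg
    have hg0 : (↑g : GWX → ℂ) =ᵐ[μ] 0 := by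
      filter_upwards [hf, hg, Lp.coeFn_smul Complex.I g, pullF (Lp.coeFn_smul Complex.I g)]
        with x e1 e2 e3 e4
      rw [e3, e4] at e1
      simp only [Pi.smul_apply, smul_eq_mul, map_mul, Complex.conj_I] at e1
      -- e1 : -I * conj g x = W x * (I * g (flip x))
      have h2 : ((gwW μ x : ℝ) : ℂ) * (↑g : GWX → ℂ) (gwFlip x) = 0 := by
        have := e1
        rw [e2] at this
        have h4 : (2 : ℂ) * (((gwW μ x : ℝ) : ℂ) * (↑g : GWX → ℂ) (gwFlip x)) = 0 := by
          linear_combination Complex.I * this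
            + 2 * (((gwW μ x : ℝ) : ℂ) * (↑g : GWX → ℂ) (gwFlip x)) * Complex.I_sq
        have h2ne : (2 : ℂ) ≠ 0 := two_ne_zero
        exact (mul_eq_zero.1 h4).resolve_left h2ne
      have hc0 : (starRingEnd ℂ) ((↑g : GWX → ℂ) x) = 0 := by rw [e2, h2]
      have hz : (↑g : GWX → ℂ) x = 0 := by
        have := congrArg (starRingEnd ℂ) hc0
        simpa using this
      simpa using hz
    have : g = 0 := Lp.ext (hg0.trans (Lp.coeFn_zero ℂ 2 μ).symm)
    rw [this, smul_zero]
  -- decomposition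
  · intro f
    have hθmem := gw_theta_memLp hflip f
    set Θ : Lp ℂ 2 μ := hθmem.toLp _ with hΘdef
    have hθ : (↑Θ : GWX → ℂ) =ᵐ[μ] fun x => ((gwW μ x : ℝ) : ℂ)
        * (starRingEnd ℂ) ((↑f : GWX → ℂ) (gwFlip x)) := hθmem.coeFn_toLp
    have hWflip := gw_w_flip_mul hflip
    refine ⟨(2⁻¹ : ℂ) • (f + Θ), ?_, (2⁻¹ : ℂ) • (Complex.I • (Θ - f)), ?_, ?_⟩
    · rw [hmem]
      filter_upwards [Lp.coeFn_smul (2⁻¹ : ℂ) (f + Θ),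
        pullF (Lp.coeFn_smul (2⁻¹ : ℂ) (f + Θ)),
        Lp.coeFn_add f Θ, pullF (Lp.coeFn_add f Θ), hθ, pullF hθ, hWflip]
        with x e1 e2 e3 e4 e5 e6 ew
      rw [e1, e2]
      simp only [Pi.smul_apply, smul_eq_mul, Pi.add_apply] at *
      rw [e3, e4, e5, e6, gwFlip_invol' x]
      have hWc : ((gwW μ x : ℝ) : ℂ) * ((gwW μ (gwFlip x) : ℝ) : ℂ) = 1 := by
        exact_mod_cast congrArg Complex.ofReal ew
      simp only [map_mul, map_add, map_inv₀, Complex.conj_ofReal, Complex.conj_conj]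
      have h2c : (starRingEnd ℂ) (2 : ℂ) = 2 := by
        simp [Complex.ext_iff]
      rw [h2c]
      linear_combination (-(2⁻¹ : ℂ) * (starRingEnd ℂ) ((↑f : GWX → ℂ) x)) * hWc
    · rw [hmem]
      filter_upwards [Lp.coeFn_smul (2⁻¹ : ℂ) (Complex.I • (Θ - f)),
        pullF (Lp.coeFn_smul (2⁻¹ : ℂ) (Complex.I • (Θ - f))),
        Lp.coeFn_smul Complex.I (Θ - f), pullF (Lp.coeFn_smul Complex.I (Θ - f)),
        Lp.coeFn_sub Θ f, pullF (Lp.coeFn_sub Θ f), hθ, pullF hθ, hWflip]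
        with x e1 e2 e3 e4 e5 e6 e7 e8 ew
      rw [e1, e2]
      simp only [Pi.smul_apply, smul_eq_mul, Pi.sub_apply] at *
      rw [e3, e4, e5, e6, e7, e8, gwFlip_invol' x]
      have hWc : ((gwW μ x : ℝ) : ℂ) * ((gwW μ (gwFlip x) : ℝ) : ℂ) = 1 := by
        exact_mod_cast congrArg Complex.ofReal ew
      simp only [map_mul, map_sub, map_inv₀, Complex.conj_ofReal, Complex.conj_conj,
        Complex.conj_I]
      have h2c : (starRingEnd ℂ) (2 : ℂ) = 2 := by
        simp [Complex.ext_iff]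
      rw [h2c]
      linear_combination (-(2⁻¹ : ℂ) * Complex.I * (starRingEnd ℂ) ((↑f : GWX → ℂ) x)) * hWc
    · have hI : Complex.I • (Complex.I • (Θ - f)) = -(Θ - f) := by
        rw [smul_smul, Complex.I_mul_I, neg_smul, one_smul]
      calc f = (2⁻¹ : ℂ) • (f + Θ) + (2⁻¹ : ℂ) • (-(Θ - f)) := by
            rw [← smul_add]
            have : f + Θ + -(Θ - f) = (2 : ℂ) • f := by
              rw [two_smul]; abel
            rw [this, smul_smul]
            norm_num
        _ = (2⁻¹ : ℂ) • (f + Θ) + Complex.I • ((2⁻¹ : ℂ) • (Complex.I • (Θ - f))) := by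
            rw [smul_comm Complex.I ((2⁻¹ : ℂ)), hI]
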